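/- Let n ≥ 1, j ≥ 1, and consider the sequential 2j-Majority process P_{2j}. Its one-step transition kernel is stochastically monotone in the state: for all states s, s' ∈ {0,…,n} with s > s' and every d ∈ {0,…,n}, P(X_{t+1} ≥ d | X_t = s) ≥ P(X_{t+1} ≥ d | X_t = s'). -/
import Mathlib


open MeasureTheory Finset
open scoped ENNReal NNReal

noncomputable section

/-- Probability mass function of a binomial random variable `Bin(m, p)` at `k`. -/
def binomPMF (m k : ℕ) (p : ℝ) : ℝ := (m.choose k : ℝ) * p ^ k * (1 - p) ^ (m - k)

/-- Tail probability `P(Bin(m, p) ≥ j)`. -/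
def binomTail (m j : ℕ) (p : ℝ) : ℝ := ∑ k ∈ Finset.Icc j m, binomPMF m k p

/-- Cumulative distribution function `P(Bin(m, p) ≤ j)`. -/
def binomCDF (m j : ℕ) (p : ℝ) : ℝ := ∑ k ∈ Finset.range (j + 1), binomPMF m k p

/-- `majProb n j s` is the sample-majority probability `q_j(s)`: the probability that an
agent sampling `j` agents uniformly at random with replacement (when `s` of the `n` agents
hold opinion `a`) adopts opinion `a` under majority with uniform tie-breaking.
For odd `j = 2m+1` this is `P(Bin(2m+1, s/n) ≥ m+1)`; for even `j = 2m` it is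
`P(Bin(2m, s/n) ≥ m+1) + (1/2)·P(Bin(2m, s/n) = m)`. -/
def majProb (n j s : ℕ) : ℝ :=
  binomTail j (j / 2 + 1) ((s : ℝ) / n) +
    if Even j then (1 / 2) * binomPMF j (j / 2) ((s : ℝ) / n) else 0

/-- One-step transition kernel of the sequential `j`-Majority process on states `{0, …, n}`:
from state `s`, move to `s+1` with probability `((n-s)/n)·q_j(s)`, to `s-1` with probability
`(s/n)·(1-q_j(s))`, and stay at `s` otherwise. -/
def seqKernel (n j : ℕ) (s u : ℕ) : ℝ :=
  if u = s + 1 then (((n : ℝ) - s) / n) * majProb n j s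
  else if u + 1 = s then ((s : ℝ) / n) * (1 - majProb n j s)
  else if u = s then
    1 - (((n : ℝ) - s) / n) * majProb n j s - ((s : ℝ) / n) * (1 - majProb n j s)
  else 0

/-- One-step transition kernel of the gossip `j`-Majority process on states `{0, …, n}`:
from state `s`, the next state is distributed as `Bin(n, q_j(s))`. -/
def gossipKernel (n j : ℕ) (s u : ℕ) : ℝ := binomPMF n u (majProb n j s)

/-- `kernelTail K n s d` is the mass that the kernel `K` places, from state `s`,
on the set `{d, d+1, …, n}`, i.e. `P(X_{t+1} ≥ d | X_t = s)`. -/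
def kernelTail (K : ℕ → ℕ → ℝ) (n s d : ℕ) : ℝ := ∑ u ∈ Finset.Icc d n, K s u

/-- `IsMarkovChain μ K x X` states that, under the probability measure `μ`, the process
`X` is a Markov chain with one-step transition kernel `K` started at `x`: `X 0 = x`
almost surely, and conditionally on any finite path the next state is distributed
according to `K` applied to the current state. -/
def IsMarkovChain {Ω : Type*} [MeasurableSpace Ω] (μ : Measure Ω)
    (K : ℕ → ℕ → ℝ) (x : ℕ) (X : ℕ → Ω → ℕ) : Prop :=
  IsProbabilityMeasure μ ∧
  (∀ t, Measurable (X t)) ∧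
  μ {ω | X 0 ω = x} = 1 ∧
  ∀ (t : ℕ) (p : ℕ → ℕ) (u : ℕ),
    μ ({ω | X (t + 1) ω = u} ∩ {ω | ∀ i ≤ t, X i ω = p i}) =
      ENNReal.ofReal (K (p t) u) * μ {ω | ∀ i ≤ t, X i ω = p i}

/-- The convergence (hitting) time: the first time `t` with `X t ∈ {0, n}`
(`⊤` if the process never reaches a consensus state). -/
def hitTime {Ω : Type*} (n : ℕ) (X : ℕ → Ω → ℕ) (ω : Ω) : ℕ∞ :=
  ⨅ (t : ℕ) (_ : X t ω = 0 ∨ X t ω = n), (t : ℕ∞)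

lemma binomPMF_nonneg (m k : ℕ) {p : ℝ} (h0 : 0 ≤ p) (h1 : p ≤ 1) :
    0 ≤ binomPMF m k p := by
  unfold binomPMF
  have : (0:ℝ) ≤ 1 - p := by linarith
  positivity

lemma binomPMF_sum (m : ℕ) (p : ℝ) :
    ∑ k ∈ Finset.range (m+1), binomPMF m k p = 1 := by
  have h := add_pow p (1-p) m
  simp only [add_sub_cancel, one_pow] at h
  have e : ∑ k ∈ Finset.range (m+1), binomPMF m k p
      = ∑ k ∈ Finset.range (m+1), p ^ k * (1-p) ^ (m-k) * (m.choose k : ℝ) :=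
    Finset.sum_congr rfl (fun k _ => by unfold binomPMF; ring)
  rw [e]
  exact h.symm

lemma binomTail_zero (m : ℕ) (p : ℝ) : binomTail m 0 p = 1 := by
  rw [binomTail, ← binomPMF_sum m p]
  apply Finset.sum_congr _ (fun _ _ => rfl)
  ext x
  simp [Nat.lt_succ_iff]

lemma binomTail_nonneg (m k : ℕ) {p : ℝ} (h0 : 0 ≤ p) (h1 : p ≤ 1) :
    0 ≤ binomTail m k p :=
  Finset.sum_nonneg fun i _ => binomPMF_nonneg m i h0 h1

lemma binomTail_le_one (m k : ℕ) {p : ℝ} (h0 : 0 ≤ p) (h1 : p ≤ 1) :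
    binomTail m k p ≤ 1 := by
  rw [← binomTail_zero m p]
  apply Finset.sum_le_sum_of_subset_of_nonneg
  · exact Finset.Icc_subset_Icc_left (Nat.zero_le k)
  · exact fun i _ _ => binomPMF_nonneg m i h0 h1

lemma binomTail_anti (m k : ℕ) {p : ℝ} (h0 : 0 ≤ p) (h1 : p ≤ 1) :
    binomTail m (k+1) p ≤ binomTail m k p := by
  apply Finset.sum_le_sum_of_subset_of_nonneg
  · exact Finset.Icc_subset_Icc_left (Nat.le_succ k)
  · exact fun i _ _ => binomPMF_nonneg m i h0 h1

lemma sum_Icc_shift (a b : ℕ) (f : ℕ → ℝ) :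
    ∑ i ∈ Finset.Icc (a+1) (b+1), f i = ∑ i ∈ Finset.Icc a b, f (i+1) := by
  rw [show a + 1 = 1 + a by omega, show b + 1 = 1 + b by omega,
    ← Finset.map_add_left_Icc, Finset.sum_map]
  apply Finset.sum_congr rfl
  intro i _
  simp [addLeftEmbedding, add_comm]

lemma binomTail_succ (m k : ℕ) (p : ℝ) :
    binomTail (m+1) (k+1) p = p * binomTail m k p + (1-p) * binomTail m (k+1) p := by
  by_cases hk : k ≤ m
  · rw [binomTail, sum_Icc_shift]
    have expand : ∀ i ∈ Finset.Icc k m, binomPMF (m+1) (i+1) p =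
        p * binomPMF m i p + ((m.choose (i+1) : ℝ) * p^(i+1) * (1-p)^(m-i)) := by
      intro i hi
      simp only [Finset.mem_Icc] at hi
      unfold binomPMF
      rw [Nat.choose_succ_succ, show m + 1 - (i+1) = m - i by omega]
      push_cast
      ring
    rw [Finset.sum_congr rfl expand, Finset.sum_add_distrib]
    have hA : ∑ i ∈ Finset.Icc k m, p * binomPMF m i p = p * binomTail m k p := by
      rw [binomTail, Finset.mul_sum]
    have h2 : ∑ i ∈ Finset.Icc k m, (m.choose (i+1) : ℝ) * p^(i+1) * (1-p)^(m-i) =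
        ∑ i ∈ Finset.Icc (k+1) (m+1), (m.choose i : ℝ) * p^i * (1-p)^(m+1-i) := by
      rw [sum_Icc_shift]
      simp [Nat.succ_sub_succ_eq_sub]
    have h3 : ∑ i ∈ Finset.Icc (k+1) (m+1), (m.choose i : ℝ) * p^i * (1-p)^(m+1-i) =
        (1-p) * binomTail m (k+1) p := by
      rw [Finset.sum_Icc_succ_top (by omega), Nat.choose_succ_self]
      rw [binomTail, Finset.mul_sum]
      simp only [Nat.cast_zero, zero_mul, add_zero]
      apply Finset.sum_congr rfl
      intro i hi
      simp only [Finset.mem_Icc] at hi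
      unfold binomPMF
      rw [show m + 1 - i = (m - i) + 1 by omega, pow_succ]
      ring
    rw [hA, h2, h3]
  · have e1 : Finset.Icc (k+1) (m+1) = ∅ := by rw [Finset.Icc_eq_empty_iff]; omega
    have e2 : Finset.Icc k m = (∅ : Finset ℕ) := by rw [Finset.Icc_eq_empty_iff]; omega
    have e3 : Finset.Icc (k+1) m = (∅ : Finset ℕ) := by rw [Finset.Icc_eq_empty_iff]; omega
    rw [binomTail, binomTail, binomTail, e1, e2, e3]
    simp

lemma binomTail_mono (m : ℕ) : ∀ (k : ℕ) {p' p : ℝ}, 0 ≤ p' → p' ≤ p → p ≤ 1 →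
    binomTail m k p' ≤ binomTail m k p := by
  induction m with
  | zero =>
    intro k p' p h0 hpp h1
    match k with
    | 0 => rw [binomTail_zero, binomTail_zero]
    | k+1 =>
      have : Finset.Icc (k+1) 0 = ∅ := by rw [Finset.Icc_eq_empty_iff]; omega
      rw [binomTail, binomTail, this]
      simp
  | succ m ih =>
    intro k p' p h0 hpp h1
    match k with
    | 0 => rw [binomTail_zero, binomTail_zero]
    | k+1 =>
      rw [binomTail_succ, binomTail_succ]
      have hp0 : 0 ≤ p := le_trans h0 hpp
      have h1' : p' ≤ 1 := le_trans hpp h1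
      have A := ih k h0 hpp h1
      have B := ih (k+1) h0 hpp h1
      have C : binomTail m (k+1) p ≤ binomTail m k p := binomTail_anti m k hp0 h1
      nlinarith [mul_nonneg h0 (sub_nonneg.2 A),
        mul_nonneg (by linarith : (0:ℝ) ≤ 1 - p') (sub_nonneg.2 B),
        mul_nonneg (by linarith : (0:ℝ) ≤ p - p') (sub_nonneg.2 C)]

lemma majProb_eq (n j s : ℕ) :
    majProb n (2*j) s =
      (1/2) * (binomTail (2*j) j ((s:ℝ)/n) + binomTail (2*j) (j+1) ((s:ℝ)/n)) := by
  unfold majProb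
  rw [show (2*j)/2 = j by omega, if_pos (even_two_mul j)]
  have hsplit : binomTail (2*j) j ((s:ℝ)/n)
      = binomPMF (2*j) j ((s:ℝ)/n) + binomTail (2*j) (j+1) ((s:ℝ)/n) := by
    rw [binomTail, Finset.Icc_eq_cons_Ioc (by omega), Finset.sum_cons, ← Finset.Icc_add_one_left_eq_Ioc]
    rfl
  rw [hsplit]
  ring

lemma majProb_nonneg (n j s : ℕ) (hn : 1 ≤ n) (hs : s ≤ n) : 0 ≤ majProb n (2*j) s := by
  have h0 : (0:ℝ) ≤ (s:ℝ)/n := by positivity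
  have h1 : (s:ℝ)/n ≤ 1 := by
    rw [div_le_one (by exact_mod_cast hn)]
    exact_mod_cast hs
  rw [majProb_eq]
  have := binomTail_nonneg (2*j) j h0 h1
  have := binomTail_nonneg (2*j) (j+1) h0 h1
  linarith

lemma majProb_le_one (n j s : ℕ) (hn : 1 ≤ n) (hs : s ≤ n) : majProb n (2*j) s ≤ 1 := by
  have h0 : (0:ℝ) ≤ (s:ℝ)/n := by positivity
  have h1 : (s:ℝ)/n ≤ 1 := by
    rw [div_le_one (by exact_mod_cast hn)]
    exact_mod_cast hs
  rw [majProb_eq]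
  have := binomTail_le_one (2*j) j h0 h1
  have := binomTail_le_one (2*j) (j+1) h0 h1
  linarith

lemma majProb_mono (n j s' s : ℕ) (hn : 1 ≤ n) (hss : s' ≤ s) (hs : s ≤ n) :
    majProb n (2*j) s' ≤ majProb n (2*j) s := by
  have hn0 : (0:ℝ) < n := by exact_mod_cast hn
  have h0 : (0:ℝ) ≤ (s':ℝ)/n := by positivity
  have hpp : (s':ℝ)/n ≤ (s:ℝ)/n := by
    gcongr
  have h1 : (s:ℝ)/n ≤ 1 := by
    rw [div_le_one hn0]
    exact_mod_cast hs
  rw [majProb_eq, majProb_eq]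
  have := binomTail_mono (2*j) j h0 hpp h1
  have := binomTail_mono (2*j) (j+1) h0 hpp h1
  linarith

lemma tail_of_big (n J s d : ℕ) (h : s + 2 ≤ d) :
    kernelTail (seqKernel n J) n s d = 0 := by
  unfold kernelTail
  apply Finset.sum_eq_zero
  intro u hu
  simp only [Finset.mem_Icc] at hu
  unfold seqKernel
  rw [if_neg (by omega), if_neg (by omega), if_neg (by omega)]

lemma tail_up (n J s : ℕ) (h : s + 1 ≤ n) :
    kernelTail (seqKernel n J) n s (s+1) = ((n:ℝ) - s)/n * majProb n J s := by
  unfold kernelTail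
  rw [Finset.Icc_eq_cons_Ioc h, Finset.sum_cons]
  have hz : ∑ u ∈ Finset.Ioc (s+1) n, seqKernel n J s u = 0 := by
    apply Finset.sum_eq_zero
    intro u hu
    simp only [Finset.mem_Ioc] at hu
    unfold seqKernel
    rw [if_neg (by omega), if_neg (by omega), if_neg (by omega)]
  rw [hz]
  unfold seqKernel
  rw [if_pos rfl]
  ring

lemma tail_self (n J s : ℕ) (hn : 1 ≤ n) (hs : s ≤ n) :
    kernelTail (seqKernel n J) n s s = 1 - (s:ℝ)/n * (1 - majProb n J s) := by
  unfold kernelTail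
  rw [Finset.Icc_eq_cons_Ioc hs, Finset.sum_cons]
  have hK : seqKernel n J s s
      = 1 - (((n:ℝ) - s) / n) * majProb n J s - ((s:ℝ) / n) * (1 - majProb n J s) := by
    unfold seqKernel
    rw [if_neg (by omega), if_neg (by omega), if_pos rfl]
  rcases eq_or_lt_of_le hs with h | h
  · have he : Finset.Ioc s n = ∅ := by rw [Finset.Ioc_eq_empty_iff]; omega
    rw [he, Finset.sum_empty, hK]
    have : ((n:ℝ) - s) = 0 := by rw [h]; ring
    rw [this]
    ring
  · have he : ∑ u ∈ Finset.Ioc s n, seqKernel n J s u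
        = kernelTail (seqKernel n J) n s (s+1) := by
      rw [kernelTail, Finset.Icc_add_one_left_eq_Ioc]
    rw [he, tail_up n J s (by omega), hK]
    ring

lemma tail_one (n J s d : ℕ) (hn : 1 ≤ n) (hs : s ≤ n) (hd : d < s) :
    kernelTail (seqKernel n J) n s d = 1 := by
  obtain ⟨t, rfl⟩ : ∃ t, s = t + 1 := ⟨s-1, by omega⟩
  have hstep : kernelTail (seqKernel n J) n (t+1) d = kernelTail (seqKernel n J) n (t+1) t := by
    unfold kernelTail
    refine (Finset.sum_subset (Finset.Icc_subset_Icc_left (by omega)) ?_).symm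
    intro u hu hnu
    simp only [Finset.mem_Icc, not_and, not_le] at hu hnu
    unfold seqKernel
    rw [if_neg (by omega), if_neg (by omega), if_neg (by omega)]
  rw [hstep, kernelTail, Finset.Icc_eq_cons_Ioc (by omega), Finset.sum_cons]
  have he : ∑ u ∈ Finset.Ioc t n, seqKernel n J (t+1) u
      = kernelTail (seqKernel n J) n (t+1) (t+1) := by
    rw [kernelTail, Finset.Icc_add_one_left_eq_Ioc]
  rw [he, tail_self n J (t+1) hn hs]
  have hK : seqKernel n J (t+1) t = ((t+1:ℕ):ℝ)/n * (1 - majProb n J (t+1)) := by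
    unfold seqKernel
    rw [if_neg (by omega), if_pos rfl]
  rw [hK]
  ring

theorem stmt6 (n j : ℕ) (hn : 1 ≤ n) (hj : 1 ≤ j) (s s' d : ℕ)
    (hs : s ≤ n) (hs' : s' ≤ n) (hss : s' < s) (hd : d ≤ n) :
    kernelTail (seqKernel n (2 * j)) n s' d ≤ kernelTail (seqKernel n (2 * j)) n s d := by
  have hn0 : (0:ℝ) < n := by exact_mod_cast hn
  have hq0 : 0 ≤ majProb n (2*j) s := majProb_nonneg n j s hn hs
  have hq0' : 0 ≤ majProb n (2*j) s' := majProb_nonneg n j s' hn hs'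
  have hq1 : majProb n (2*j) s ≤ 1 := majProb_le_one n j s hn hs
  have hq1' : majProb n (2*j) s' ≤ 1 := majProb_le_one n j s' hn hs'
  have hqm : majProb n (2*j) s' ≤ majProb n (2*j) s :=
    majProb_mono n j s' s hn (le_of_lt hss) hs
  have hsr : (s:ℝ) ≤ n := by exact_mod_cast hs
  have hsr1 : (1:ℝ) ≤ s := by exact_mod_cast Nat.one_le_iff_ne_zero.2 (by omega)
  have hsr' : (0:ℝ) ≤ (s':ℝ) := by positivity
  have hsr'' : (s':ℝ) ≤ n := by exact_mod_cast hs'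
  rcases Nat.lt_or_ge d s with hds | hds
  · rw [tail_one n (2*j) s d hn hs hds]
    have hcase : d < s' ∨ d = s' ∨ d = s' + 1 ∨ s' + 2 ≤ d := by omega
    rcases hcase with h | h | h | h
    · rw [tail_one n (2*j) s' d hn hs' h]
    · rw [h, tail_self n (2*j) s' hn hs']
      have : 0 ≤ (s':ℝ)/n * (1 - majProb n (2*j) s') :=
        mul_nonneg (div_nonneg hsr' hn0.le) (by linarith)
      linarith
    · rw [h, tail_up n (2*j) s' (by omega)]
      have hf1 : ((n:ℝ) - s')/n ≤ 1 := by
        rw [div_le_one hn0]; linarith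
      have hf0 : (0:ℝ) ≤ ((n:ℝ) - s')/n := div_nonneg (by linarith) hn0.le
      nlinarith
    · rw [tail_of_big n (2*j) s' d h]
      norm_num
  · have hcase : d = s ∨ d = s + 1 ∨ s + 2 ≤ d := by omega
    rcases hcase with h | h | h
    · rw [h, tail_self n (2*j) s hn hs]
      have hcase' : s = s' + 1 ∨ s' + 2 ≤ s := by omega
      rcases hcase' with h' | h'
      · subst h'
        rw [tail_up n (2*j) s' (by omega)]
        push_cast at hsr ⊢
        set a : ℝ := (s' : ℝ)
        set Q : ℝ := majProb n (2*j) (s'+1)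
        set q' : ℝ := majProb n (2*j) s'
        rw [div_mul_eq_mul_div, div_le_iff₀ hn0]
        have hexp : (1 - ((a:ℝ)+1)/n * (1 - Q)) * n = n - (a+1)*(1-Q) := by
          field_simp
        rw [hexp]
        nlinarith [mul_nonneg (by linarith : (0:ℝ) ≤ n - a - 1) (by linarith : (0:ℝ) ≤ 1 - q'),
          mul_nonneg hsr' hq0]
      · rw [tail_of_big n (2*j) s' s (by omega)]
        have hf1 : (s:ℝ)/n ≤ 1 := by rw [div_le_one hn0]; exact hsr
        have hf0 : (0:ℝ) ≤ (s:ℝ)/n := by positivity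
        nlinarith
    · rw [h, tail_up n (2*j) s (by omega), tail_of_big n (2*j) s' (s+1) (by omega)]
      exact mul_nonneg (div_nonneg (by linarith) hn0.le) hq0
    · rw [tail_of_big n (2*j) s d h, tail_of_big n (2*j) s' d (by omega)]
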